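/- Let d ≥ 1, 1 ≤ p < ∞, and M₁ > 0. Let ρ : ℝ^d → ℝ be differentiable with ‖Dρ(y)‖ ≤ M₁/2 for all y ∈ ℝ^d. Let A, A' ⊆ ℝ^d be measurable sets such that y − (ρ(y)/M₁) w ∈ A' for every y ∈ A and every w in the closed unit ball B₁ ⊆ ℝ^d. Let φ : ℝ^d → [0,∞) be integrable with support contained in B₁, and let g : ℝ^d → ℝ be measurable with ‖g‖_{L_p(A')} < ∞. Then the mollification g̃(y) := ∫_{B₁} g(y − (ρ(y)/M₁) w) φ(w) dw satisfies ‖g̃‖_{L_p(A)} ≤ 2^{1/p} ‖φ‖_{L_1(ℝ^d)} ‖g‖_{L_p(A')}. -/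

import Mathlib

open MeasureTheory ENNReal


lemma det_id_sub_smulRight {d : ℕ} (f : EuclideanSpace ℝ (Fin d) →L[ℝ] ℝ) (w : EuclideanSpace ℝ (Fin d)) :
    (ContinuousLinearMap.id ℝ (EuclideanSpace ℝ (Fin d)) - f.smulRight w).det = 1 - f w := by
  classical
  rw [ContinuousLinearMap.det]
  set b := (EuclideanSpace.basisFun (Fin d) ℝ).toBasis with hb
  rw [← LinearMap.det_toMatrix b]
  have h1 : (LinearMap.toMatrix b b) ((ContinuousLinearMap.id ℝ (EuclideanSpace ℝ (Fin d)) - f.smulRight w :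
        EuclideanSpace ℝ (Fin d) →L[ℝ] EuclideanSpace ℝ (Fin d)) :
        EuclideanSpace ℝ (Fin d) →ₗ[ℝ] EuclideanSpace ℝ (Fin d))
      = 1 - Matrix.replicateCol Unit (fun i => b.repr w i) * Matrix.replicateRow Unit (fun j => f (b j)) := by
    ext i j
    simp only [LinearMap.toMatrix_apply, ContinuousLinearMap.coe_sub', Pi.sub_apply,
      ContinuousLinearMap.coe_id', id_eq, ContinuousLinearMap.smulRight_apply, map_sub,
      _root_.map_smul, Matrix.sub_apply, Matrix.one_apply, Matrix.mul_apply, Matrix.replicateCol_apply,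
      Matrix.replicateRow_apply, Finset.univ_unique, Finset.sum_singleton, smul_eq_mul, Finsupp.smul_apply]
    rw [hb]
    simp [OrthonormalBasis.coe_toBasis_repr_apply, EuclideanSpace.basisFun_repr,
      OrthonormalBasis.coe_toBasis, EuclideanSpace.basisFun_apply, Finsupp.single_apply,
      EuclideanSpace.single_apply, mul_comm, eq_comm]
  rw [h1, Matrix.det_one_sub_mul_comm, Matrix.det_unique]
  have h2 : f w = ∑ j, b.repr w j * f (b j) := by
    conv_lhs => rw [← b.sum_repr w]
    simp only [map_sum, _root_.map_smul, smul_eq_mul]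
  simp [Matrix.mul_apply, h2, mul_comm]


lemma cov_bound {d : ℕ} (M₁ : ℝ) (hM₁ : 0 < M₁)
    (ρ : EuclideanSpace ℝ (Fin d) → ℝ) (hρ : Differentiable ℝ ρ)
    (hρ' : ∀ y, ‖fderiv ℝ ρ y‖ ≤ M₁ / 2)
    (A A' : Set (EuclideanSpace ℝ (Fin d))) (hA : MeasurableSet A)
    (w : EuclideanSpace ℝ (Fin d)) (hw : ‖w‖ ≤ 1)
    (hsub : ∀ y ∈ A, y - (ρ y / M₁) • w ∈ A')
    (g : EuclideanSpace ℝ (Fin d) → ℝ≥0∞) :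
    ∫⁻ y in A, g (y - (ρ y / M₁) • w) ≤ 2 * ∫⁻ x in A', g x := by
  set T : EuclideanSpace ℝ (Fin d) → EuclideanSpace ℝ (Fin d) :=
    fun y => y - (ρ y / M₁) • w with hT
  set T' : EuclideanSpace ℝ (Fin d) → (EuclideanSpace ℝ (Fin d) →L[ℝ] EuclideanSpace ℝ (Fin d)) :=
    fun y => ContinuousLinearMap.id ℝ (EuclideanSpace ℝ (Fin d)) - (M₁⁻¹ • fderiv ℝ ρ y).smulRight w with hT'
  have hderiv : ∀ y, HasFDerivAt T (T' y) y := by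
    intro y
    have h1 : HasFDerivAt (fun y => ρ y / M₁) (M₁⁻¹ • fderiv ℝ ρ y) y := by
      simp only [div_eq_inv_mul, ← smul_eq_mul]
      exact (hρ y).hasFDerivAt.const_smul M₁⁻¹
    exact (hasFDerivAt_id y).sub (h1.smul_const w)
  -- derivative bound
  have hlin : ∀ y, |(M₁⁻¹ • fderiv ℝ ρ y) w| ≤ 1 / 2 := by
    intro y
    have h2 : ‖(M₁⁻¹ • fderiv ℝ ρ y) w‖ ≤ ‖M₁⁻¹ • fderiv ℝ ρ y‖ * ‖w‖ :=
      (M₁⁻¹ • fderiv ℝ ρ y).le_opNorm w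
    have h3 : ‖M₁⁻¹ • fderiv ℝ ρ y‖ ≤ 1 / 2 := by
      rw [norm_smul, norm_inv, Real.norm_eq_abs, abs_of_pos hM₁]
      calc M₁⁻¹ * ‖fderiv ℝ ρ y‖ ≤ M₁⁻¹ * (M₁ / 2) := by
            exact mul_le_mul_of_nonneg_left (hρ' y) (by positivity)
        _ = 1 / 2 := by field_simp
    calc |(M₁⁻¹ • fderiv ℝ ρ y) w| ≤ ‖M₁⁻¹ • fderiv ℝ ρ y‖ * ‖w‖ := h2
      _ ≤ (1/2) * 1 := mul_le_mul h3 hw (norm_nonneg _) (by norm_num)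
      _ = 1/2 := by ring
  have hdet : ∀ y, 1/2 ≤ (T' y).det := by
    intro y
    rw [hT']
    simp only
    rw [det_id_sub_smulRight]
    have := hlin y
    rw [abs_le] at this
    linarith [this.2]
  -- Lipschitz of ρ
  have hρlip : ∀ y₁ y₂, ‖ρ y₁ - ρ y₂‖ ≤ (M₁/2) * ‖y₁ - y₂‖ := by
    intro y₁ y₂
    exact Convex.norm_image_sub_le_of_norm_fderiv_le (fun x _ => hρ x)
      (fun x _ => hρ' x) (convex_univ) (Set.mem_univ y₂) (Set.mem_univ y₁)
  have hinj : Function.Injective T := by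
    intro y₁ y₂ h
    have h4 : y₁ - y₂ = ((ρ y₁ - ρ y₂) / M₁) • w := by
      have h5 : y₁ - (ρ y₁ / M₁) • w = y₂ - (ρ y₂ / M₁) • w := h
      have h6 := sub_eq_sub_iff_sub_eq_sub.mp h5
      rw [h6, ← sub_smul, div_sub_div_same]
    have h7 : ‖y₁ - y₂‖ ≤ (1/2) * ‖y₁ - y₂‖ := by
      calc ‖y₁ - y₂‖ = ‖((ρ y₁ - ρ y₂) / M₁)‖ * ‖w‖ := by rw [h4, norm_smul]
        _ ≤ (|ρ y₁ - ρ y₂| / M₁) * 1 := by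
            apply mul_le_mul _ hw (norm_nonneg w) (by positivity)
            rw [Real.norm_eq_abs, abs_div, abs_of_pos hM₁]
        _ = |ρ y₁ - ρ y₂| / M₁ := by ring
        _ ≤ ((M₁/2) * ‖y₁ - y₂‖) / M₁ := by
            have h10 := hρlip y₁ y₂
            rw [Real.norm_eq_abs] at h10
            gcongr
        _ = (1/2) * ‖y₁ - y₂‖ := by field_simp
    have h8 : ‖y₁ - y₂‖ ≤ 0 := by linarith
    have : y₁ - y₂ = 0 := by
      have := norm_nonneg (y₁ - y₂)
      have : ‖y₁ - y₂‖ = 0 := le_antisymm h8 this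
      exact norm_eq_zero.mp this
    exact sub_eq_zero.mp this
  have him := lintegral_image_eq_lintegral_abs_det_fderiv_mul volume hA
    (fun y _ => (hderiv y).hasFDerivWithinAt) hinj.injOn g
  have hone : ∀ y, (1:ℝ≥0∞) ≤ 2 * ENNReal.ofReal |(T' y).det| := by
    intro y
    have h9 : (1/2 : ℝ) ≤ |(T' y).det| := le_trans (hdet y) (le_abs_self _)
    have h10 : (2:ℝ≥0∞) * ENNReal.ofReal (1/2) = 1 := by
      rw [ENNReal.ofReal_div_of_pos (by norm_num), ENNReal.ofReal_one, ENNReal.ofReal_ofNat,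
        ENNReal.mul_div_cancel (by norm_num) (by norm_num)]
    calc (1:ℝ≥0∞) = 2 * ENNReal.ofReal (1/2) := h10.symm
      _ ≤ 2 * ENNReal.ofReal |(T' y).det| := mul_le_mul_right (ENNReal.ofReal_le_ofReal h9) 2
  calc ∫⁻ y in A, g (y - (ρ y / M₁) • w)
      ≤ ∫⁻ y in A, (2 * ENNReal.ofReal |(T' y).det|) * g (T y) := by
        refine lintegral_mono fun y => ?_
        simpa using mul_le_mul_left (hone y) (g (T y))
    _ = 2 * ∫⁻ y in A, ENNReal.ofReal |(T' y).det| * g (T y) := by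
        rw [← lintegral_const_mul' 2 _ (by norm_num)]
        simp [mul_assoc]
    _ = 2 * ∫⁻ x in T '' A, g x := by rw [him]
    _ ≤ 2 * ∫⁻ x in A', g x := by
        apply mul_le_mul_right
        refine lintegral_mono' (Measure.restrict_mono ?_ le_rfl) le_rfl
        rintro x ⟨y, hy, rfl⟩
        exact hsub y hy



lemma jensen_aux {α : Type*} [MeasurableSpace α] (μ : Measure α) (p : ℝ) (hp : 1 ≤ p)
    (F G : α → ℝ≥0∞) (hF : AEMeasurable F μ) (hG : AEMeasurable G μ) :
    (∫⁻ a, F a * G a ∂μ) ^ p ≤ (∫⁻ a, G a ∂μ) ^ (p - 1) * ∫⁻ a, (F a) ^ p * G a ∂μ := by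
  rcases eq_or_lt_of_le hp with h | h
  · simp [← h]
  have hp0 : 0 < p := lt_trans one_pos h
  set q := p / (p - 1) with hq
  have hpq : p.HolderConjugate q := Real.HolderConjugate.conjExponent h
  have hq0 : 0 < q := hpq.symm.pos
  have key := ENNReal.lintegral_mul_le_Lp_mul_Lq μ hpq
    (f := fun a => F a * (G a) ^ (1/p)) (g := fun a => (G a) ^ (1/q))
    (hF.mul (hG.pow_const _)) (hG.pow_const _)
  have h1 : ∀ a, (fun a => F a * (G a) ^ (1/p)) a * (fun a => (G a) ^ (1/q)) a = F a * G a := by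
    intro a
    rw [mul_assoc, ← ENNReal.rpow_add_of_nonneg _ _ (by positivity) (by positivity),
      show 1/p + 1/q = 1 by rw [one_div, one_div]; exact hpq.inv_add_inv_eq_one, ENNReal.rpow_one]
  have h2 : ∀ a, ((fun a => F a * (G a) ^ (1/p)) a) ^ p = (F a) ^ p * G a := by
    intro a
    rw [ENNReal.mul_rpow_of_nonneg _ _ hp0.le, ← ENNReal.rpow_mul,
      one_div_mul_cancel hp0.ne', ENNReal.rpow_one]
  have h3 : ∀ a, ((fun a => (G a) ^ (1/q)) a) ^ q = G a := by
    intro a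
    rw [← ENNReal.rpow_mul, one_div_mul_cancel hq0.ne', ENNReal.rpow_one]
  simp only [Pi.mul_apply, h1, h2, h3] at key
  have key2 := ENNReal.rpow_le_rpow key hp0.le
  rw [ENNReal.mul_rpow_of_nonneg _ _ hp0.le, ← ENNReal.rpow_mul, ← ENNReal.rpow_mul,
    one_div_mul_cancel hp0.ne', ENNReal.rpow_one] at key2
  have h4 : 1 / q * p = p - 1 := by
    rw [hq]
    field_simp
  rw [h4] at key2
  rw [mul_comm] at key2
  exact key2


theorem mollification_Lp_bound (d : ℕ) (hd : 1 ≤ d) (p : ℝ) (hp : 1 ≤ p)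
    (M₁ : ℝ) (hM₁ : 0 < M₁)
    (ρ : EuclideanSpace ℝ (Fin d) → ℝ) (hρ : Differentiable ℝ ρ)
    (hρ' : ∀ y, ‖fderiv ℝ ρ y‖ ≤ M₁ / 2)
    (A A' : Set (EuclideanSpace ℝ (Fin d)))
    (hA : MeasurableSet A) (hA' : MeasurableSet A')
    (hAA' : ∀ y ∈ A, ∀ w ∈ Metric.closedBall (0 : EuclideanSpace ℝ (Fin d)) 1,
      y - (ρ y / M₁) • w ∈ A')
    (φ : EuclideanSpace ℝ (Fin d) → ℝ) (hφint : Integrable φ)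
    (hφ0 : ∀ w, 0 ≤ φ w)
    (hφsupp : Function.support φ ⊆ Metric.closedBall (0 : EuclideanSpace ℝ (Fin d)) 1)
    (g : EuclideanSpace ℝ (Fin d) → ℝ) (hg : Measurable g)
    (hgLp : eLpNorm g (ENNReal.ofReal p) (volume.restrict A') < ⊤) :
    eLpNorm (fun y => ∫ w in Metric.closedBall (0 : EuclideanSpace ℝ (Fin d)) 1,
        g (y - (ρ y / M₁) • w) * φ w) (ENNReal.ofReal p) (volume.restrict A)
      ≤ ENNReal.ofReal (2 ^ (1 / p)) * eLpNorm φ 1 volume *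
        eLpNorm g (ENNReal.ofReal p) (volume.restrict A') := by
  classical
  set B := Metric.closedBall (0 : EuclideanSpace ℝ (Fin d)) 1 with hB
  have hp0 : 0 < p := lt_of_lt_of_le one_pos hp
  have hpne : ENNReal.ofReal p ≠ 0 := by
    simp only [ne_eq, ENNReal.ofReal_eq_zero, not_le]; exact hp0
  have hptop : ENNReal.ofReal p ≠ ⊤ := ENNReal.ofReal_ne_top
  have htoReal : (ENNReal.ofReal p).toReal = p := ENNReal.toReal_ofReal hp0.le
  set Φ := eLpNorm φ 1 volume with hΦ
  have hΦfin : Φ ≠ ⊤ := by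
    rw [hΦ, eLpNorm_one_eq_lintegral_enorm]
    exact hφint.2.ne
  have hΦB : ∫⁻ w in B, (‖φ w‖₊ : ℝ≥0∞) = Φ := by
    rw [hΦ, eLpNorm_one_eq_lintegral_enorm]
    apply setLIntegral_eq_of_support_subset
    intro w hw
    apply hφsupp
    simp only [Function.mem_support, ne_eq] at hw ⊢
    intro h
    exact hw (by simp [h])
  set N := eLpNorm g (ENNReal.ofReal p) (volume.restrict A') with hN
  set I' := ∫⁻ x in A', (‖g x‖₊ : ℝ≥0∞) ^ p with hI'
  have hNI : N = I' ^ (1/p) := by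
    rw [hN, eLpNorm_eq_lintegral_rpow_enorm_toReal hpne hptop, htoReal]
    rfl
  have hI'fin : I' ≠ ⊤ := fun h =>
    hgLp.ne (by rw [hNI, h, ENNReal.top_rpow_of_pos (by positivity)])
  -- measurability of the composed map on the product
  have hcont : Continuous fun yw : EuclideanSpace ℝ (Fin d) × EuclideanSpace ℝ (Fin d) =>
      yw.1 - (ρ yw.1 / M₁) • yw.2 :=
    continuous_fst.sub (((hρ.continuous.comp continuous_fst).div_const M₁).smul continuous_snd)
  have hgT : Measurable fun yw : EuclideanSpace ℝ (Fin d) × EuclideanSpace ℝ (Fin d) =>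
      g (yw.1 - (ρ yw.1 / M₁) • yw.2) := hg.comp hcont.measurable
  -- pointwise Jensen/Hölder bound
  have stepA : ∀ y : EuclideanSpace ℝ (Fin d),
      (‖∫ w in B, g (y - (ρ y / M₁) • w) * φ w‖₊ : ℝ≥0∞) ^ p
        ≤ Φ ^ (p - 1) * ∫⁻ w in B, (‖g (y - (ρ y / M₁) • w)‖₊ : ℝ≥0∞) ^ p * ‖φ w‖₊ := by
    intro y
    have hKy : Measurable fun w : EuclideanSpace ℝ (Fin d) =>
        (‖g (y - (ρ y / M₁) • w)‖₊ : ℝ≥0∞) := by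
      have : Continuous fun w : EuclideanSpace ℝ (Fin d) => y - (ρ y / M₁) • w :=
        continuous_const.sub (continuous_const_smul _)
      exact (hg.comp this.measurable).enorm
    have hb1 : (‖∫ w in B, g (y - (ρ y / M₁) • w) * φ w‖₊ : ℝ≥0∞)
        ≤ ∫⁻ w in B, (‖g (y - (ρ y / M₁) • w)‖₊ : ℝ≥0∞) * ‖φ w‖₊ := by
      refine (enorm_integral_le_lintegral_enorm _).trans_eq ?_
      refine lintegral_congr fun w => ?_
      simp [nnnorm_mul, ENNReal.coe_mul]
      rfl
    calc (‖∫ w in B, g (y - (ρ y / M₁) • w) * φ w‖₊ : ℝ≥0∞) ^ p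
        ≤ (∫⁻ w in B, (‖g (y - (ρ y / M₁) • w)‖₊ : ℝ≥0∞) * ‖φ w‖₊) ^ p :=
          ENNReal.rpow_le_rpow hb1 hp0.le
      _ ≤ (∫⁻ w in B, (‖φ w‖₊ : ℝ≥0∞)) ^ (p - 1) *
            ∫⁻ w in B, (‖g (y - (ρ y / M₁) • w)‖₊ : ℝ≥0∞) ^ p * ‖φ w‖₊ :=
          jensen_aux _ p hp _ _ hKy.aemeasurable
            (hφint.aemeasurable.restrict.enorm)
      _ = Φ ^ (p - 1) * ∫⁻ w in B, (‖g (y - (ρ y / M₁) • w)‖₊ : ℝ≥0∞) ^ p * ‖φ w‖₊ := by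
          rw [hΦB]
  -- main lintegral bound
  have hprod : AEMeasurable
      (fun yw : EuclideanSpace ℝ (Fin d) × EuclideanSpace ℝ (Fin d) =>
        (‖g (yw.1 - (ρ yw.1 / M₁) • yw.2)‖₊ : ℝ≥0∞) ^ p * ‖φ yw.2‖₊)
      ((volume.restrict A).prod (volume.restrict B)) := by
    refine AEMeasurable.mul ?_ ?_
    · exact (ENNReal.continuous_rpow_const.measurable.comp hgT.enorm).aemeasurable
    · exact (hφint.aemeasurable.restrict (s := B)).enorm.comp_snd
  have hmain : ∫⁻ y in A, (‖∫ w in B, g (y - (ρ y / M₁) • w) * φ w‖₊ : ℝ≥0∞) ^ p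
      ≤ 2 * Φ ^ p * I' := by
    calc ∫⁻ y in A, (‖∫ w in B, g (y - (ρ y / M₁) • w) * φ w‖₊ : ℝ≥0∞) ^ p
        ≤ ∫⁻ y in A, Φ ^ (p - 1) *
            ∫⁻ w in B, (‖g (y - (ρ y / M₁) • w)‖₊ : ℝ≥0∞) ^ p * ‖φ w‖₊ :=
          lintegral_mono fun y => stepA y
      _ = Φ ^ (p - 1) * ∫⁻ y in A,
            ∫⁻ w in B, (‖g (y - (ρ y / M₁) • w)‖₊ : ℝ≥0∞) ^ p * ‖φ w‖₊ :=
          lintegral_const_mul' _ _ (ENNReal.rpow_ne_top_of_nonneg (by linarith) hΦfin)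
      _ = Φ ^ (p - 1) * ∫⁻ w in B,
            ∫⁻ y in A, (‖g (y - (ρ y / M₁) • w)‖₊ : ℝ≥0∞) ^ p * ‖φ w‖₊ := by
          rw [lintegral_lintegral_swap hprod]
      _ = Φ ^ (p - 1) * ∫⁻ w in B,
            (∫⁻ y in A, (‖g (y - (ρ y / M₁) • w)‖₊ : ℝ≥0∞) ^ p) * ‖φ w‖₊ := by
          congr 1
          exact lintegral_congr fun w => lintegral_mul_const' _ _ ENNReal.coe_ne_top
      _ ≤ Φ ^ (p - 1) * ∫⁻ w in B, (2 * I') * ‖φ w‖₊ := by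
          refine mul_le_mul_right ?_ _
          refine setLIntegral_mono' (measurableSet_closedBall) fun w hw => ?_
          refine mul_le_mul_left ?_ _
          exact cov_bound M₁ hM₁ ρ hρ hρ' A A' hA w
            (by simpa [hB, mem_closedBall_zero_iff] using hw)
            (fun y hy => hAA' y hy w hw)
            (fun x => (‖g x‖₊ : ℝ≥0∞) ^ p)
      _ = Φ ^ (p - 1) * ((2 * I') * Φ) := by
          rw [lintegral_const_mul' _ _ (ENNReal.mul_ne_top (by norm_num) hI'fin), hΦB]
      _ = 2 * Φ ^ p * I' := by
          have hsplit : Φ ^ (p - 1) * Φ = Φ ^ p := by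
            nth_rewrite 2 [← ENNReal.rpow_one Φ]
            rw [← ENNReal.rpow_add_of_nonneg _ _ (by linarith) zero_le_one]
            norm_num
          rw [← hsplit]
          ring
  calc eLpNorm (fun y => ∫ w in B, g (y - (ρ y / M₁) • w) * φ w)
        (ENNReal.ofReal p) (volume.restrict A)
      = (∫⁻ y in A, (‖∫ w in B, g (y - (ρ y / M₁) • w) * φ w‖₊ : ℝ≥0∞) ^ p) ^ (1/p) := by
        rw [eLpNorm_eq_lintegral_rpow_enorm_toReal hpne hptop, htoReal]
        rfl
    _ ≤ (2 * Φ ^ p * I') ^ (1/p) := ENNReal.rpow_le_rpow hmain (by positivity)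
    _ = (2:ℝ≥0∞) ^ (1/p) * Φ * N := by
        rw [ENNReal.mul_rpow_of_nonneg _ _ (by positivity),
          ENNReal.mul_rpow_of_nonneg _ _ (by positivity),
          ← ENNReal.rpow_mul Φ, mul_one_div_cancel hp0.ne', ENNReal.rpow_one, ← hNI]
    _ = ENNReal.ofReal (2 ^ (1/p)) * Φ * N := by
        rw [show ENNReal.ofReal (2 ^ (1/p)) = (2:ℝ≥0∞) ^ (1/p) by
          rw [← ENNReal.ofReal_rpow_of_pos (by norm_num : (0:ℝ) < 2), ENNReal.ofReal_ofNat]]
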